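/- (Subsampled-column WDD identity, noiseless) Let x, m ∈ ℂ^d, let K divide d, and for ℓ ∈ [d]_0 let y_ℓ ∈ ℂ^d be given componentwise by (y_ℓ)_k = |Σ_{n=0}^{d-1} x_n m_{(n-ℓ) mod d} e^{-2πink/d}|^2. Then for every ℓ ∈ [d]_0 and ω ∈ [K]_0, (F_K Z_{d/K}(y_ℓ))_ω = K Σ_{r=0}^{d/K - 1} ((x ∘ S_{ω-rK} conj(x)) ∗_d ((Rm) ∘ S_{rK-ω} conj(Rm)))_ℓ. -/

import Mathlib

open Complex BigOperators Finset

/-- Discrete Fourier transform on `ℂ^d` (indexed by `ZMod d`). -/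
noncomputable def dftV (d : ℕ) [NeZero d] (x : ZMod d → ℂ) : ZMod d → ℂ :=
  fun k => ∑ n : ZMod d, x n *
    Complex.exp (-2 * Real.pi * Complex.I * (n.val : ℂ) * (k.val : ℂ) / (d : ℂ))

/-- Circular shift: `(S_ℓ x)_n = x_{n+ℓ}`. -/
def shiftV {d : ℕ} (ℓ : ZMod d) (x : ZMod d → ℂ) : ZMod d → ℂ := fun n => x (n + ℓ)

/-- Reversal: `(R x)_n = x_{-n}`. -/
def revV {d : ℕ} (x : ZMod d → ℂ) : ZMod d → ℂ := fun n => x (-n)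

/-- Componentwise complex conjugation. -/
def conjV {d : ℕ} (x : ZMod d → ℂ) : ZMod d → ℂ := fun n => (starRingEnd ℂ) (x n)

/-- Hadamard (componentwise) product. -/
def hadV {d : ℕ} (x y : ZMod d → ℂ) : ZMod d → ℂ := fun n => x n * y n

/-- Circular convolution. -/
noncomputable def convV (d : ℕ) [NeZero d] (x y : ZMod d → ℂ) : ZMod d → ℂ :=
  fun ℓ => ∑ n : ZMod d, x n * y (ℓ - n)

/-- Modulation: `(W_ℓ x)_n = x_n e^{2πiℓn/d}`. -/
noncomputable def modV {d : ℕ} (ℓ : ZMod d) (x : ZMod d → ℂ) : ZMod d → ℂ :=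
  fun n => x n * Complex.exp (2 * Real.pi * Complex.I * (ℓ.val : ℂ) * (n.val : ℂ) / (d : ℂ))

lemma sumValZMod {K : ℕ} [NeZero K] (f : ℕ → ℂ) :
    ∑ j : ZMod K, f j.val = ∑ i ∈ Finset.range K, f i := by
  refine Finset.sum_bij' (fun (j : ZMod K) _ => j.val) (fun i _ => (i : ZMod K))
    (fun j _ => Finset.mem_range.mpr (ZMod.val_lt j)) (fun i _ => Finset.mem_univ _)
    (fun j _ => by simp [ZMod.natCast_val, ZMod.cast_id])
    (fun i hi => ZMod.val_cast_of_lt (Finset.mem_range.mp hi))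
    (fun j _ => rfl)

lemma charSum (K : ℕ) [NeZero K] (z : ℂ) (hz : z ^ K = 1) :
    ∑ j : ZMod K, z ^ j.val = if z = 1 then (K : ℂ) else 0 := by
  rw [sumValZMod]
  split_ifs with h
  · simp [h]
  · rw [geom_sum_eq h, hz]; simp

lemma sum_shift (d K D : ℕ) [NeZero d] [NeZero K] (hD : K * D = d) (w : ℕ) (f : ZMod d → ℂ) :
    ∑ n' : ZMod d, (if (K : ℤ) ∣ ((w : ℤ) - (n'.val : ℤ)) then f n' else 0)
      = ∑ r ∈ Finset.range D, f ((((w : ℤ) - (r : ℤ) * (K : ℤ)) : ℤ) : ZMod d) := by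
  have hK0 : 0 < (K : ℤ) := by exact_mod_cast Nat.pos_of_ne_zero (NeZero.ne K)
  have hDne : D ≠ 0 := by rintro rfl; exact NeZero.ne d (by omega)
  have hD0 : 0 < (D : ℤ) := by exact_mod_cast Nat.pos_of_ne_zero hDne
  have hdvd : ∀ a : ℤ, (d : ℤ) ∣ (((a : ZMod d).val : ℤ) - a) := by
    intro a
    have : (((((a : ZMod d).val : ℤ) - a) : ℤ) : ZMod d) = 0 := by
      push_cast [ZMod.natCast_val, ZMod.cast_id]
      simp
    exact (ZMod.intCast_zmod_eq_zero_iff_dvd _ _).mp this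
  have hKd : (K : ℤ) ∣ (d : ℤ) := ⟨D, by exact_mod_cast hD.symm⟩
  rw [← Finset.sum_filter]
  refine Eq.symm (Finset.sum_bij' (fun r _ => ((((w : ℤ) - (r : ℤ) * (K : ℤ)) : ℤ) : ZMod d))
    (fun (n' : ZMod d) _ => ((((w : ℤ) - (n'.val : ℤ)) / K) % D).toNat) ?_ ?_ ?_ ?_ ?_)
  · intro r _
    refine Finset.mem_filter.mpr ⟨Finset.mem_univ _, ?_⟩
    set a : ℤ := (w : ℤ) - (r : ℤ) * K with ha
    have h2 : (K : ℤ) ∣ (((a : ZMod d).val : ℤ) - a) := dvd_trans hKd (hdvd a)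
    have h3 : (K : ℤ) ∣ ((w : ℤ) - a) := ⟨r, by rw [ha]; ring⟩
    have h4 : (w : ℤ) - ((a : ZMod d).val : ℤ) = ((w : ℤ) - a) - (((a : ZMod d).val : ℤ) - a) := by ring
    show (K : ℤ) ∣ (w : ℤ) - (((a : ZMod d).val : ℤ))
    rw [h4]
    exact dvd_sub h3 h2
  · intro n' _
    refine Finset.mem_range.mpr ?_
    have h1 : 0 ≤ (((w : ℤ) - (n'.val : ℤ)) / K) % D := Int.emod_nonneg _ hD0.ne'
    have h2 : (((w : ℤ) - (n'.val : ℤ)) / K) % D < D := Int.emod_lt_of_pos _ hD0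
    show ((((w : ℤ) - (n'.val : ℤ)) / K) % D).toNat < D
    omega
  · intro r hr
    have hrD : (r : ℤ) < D := by exact_mod_cast Finset.mem_range.mp hr
    set a : ℤ := (w : ℤ) - (r : ℤ) * K with ha
    obtain ⟨s, hs⟩ := hdvd a
    have hval : (((a : ZMod d).val : ℤ)) = a + d * s := by linarith [hs]
    show ((((w : ℤ) - (((a : ZMod d).val : ℤ))) / K) % D).toNat = r
    have h1 : (w : ℤ) - (((a : ZMod d).val : ℤ)) = K * ((r : ℤ) - D * s) := by
      rw [hval, ha]; push_cast [← hD]; ring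
    have h2 : ((r : ℤ) - (D : ℤ) * s) = (r : ℤ) + (D : ℤ) * (-s) := by ring
    rw [h1, Int.mul_ediv_cancel_left _ hK0.ne', h2, Int.add_mul_emod_self_left,
      Int.emod_eq_of_lt (by positivity) hrD]
    exact Int.toNat_natCast r
  · intro n' hn'
    obtain ⟨q, hq⟩ := (Finset.mem_filter.mp hn').2
    have hqd : ((w : ℤ) - (n'.val : ℤ)) / K = q := by
      rw [hq]; exact Int.mul_ediv_cancel_left _ hK0.ne'
    show ((((w : ℤ) - ((((((w : ℤ) - (n'.val : ℤ)) / K) % D).toNat : ℕ) : ℤ) * K) : ℤ) : ZMod d) = n'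
    have htn : (((((((w : ℤ) - (n'.val : ℤ)) / K) % D).toNat : ℕ)) : ℤ) = q % D := by
      rw [hqd]; exact Int.toNat_of_nonneg (Int.emod_nonneg _ hD0.ne')
    rw [htn]
    obtain ⟨s, hs⟩ : (D : ℤ) ∣ (q - q % D) := Int.dvd_self_sub_of_emod_eq rfl
    have key : ((w : ℤ) - (q % D) * K) - (n'.val : ℤ) = (d : ℤ) * (s * 1) := by
      have h5 : (w : ℤ) - (n'.val : ℤ) = K * q := hq
      have h6 : q % D = q - D * s := by linarith [hs]
      rw [h6]
      push_cast [← hD]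
      linear_combination h5
    have : ((((w : ℤ) - (q % D) * K) : ℤ) : ZMod d) = ((n'.val : ℤ) : ZMod d) := by
      rw [ZMod.intCast_eq_intCast_iff]
      exact Int.modEq_iff_dvd.mpr ⟨-(s * 1), by linarith [key]⟩
    rw [this]
    push_cast [ZMod.natCast_val, ZMod.cast_id]
    rfl
  · intro r _; rfl

lemma expToPowSub (d K : ℕ) [NeZero d] (D : ℕ) (hKD : K * D = d) (a b : ℕ) :
    Complex.exp (-2 * (Real.pi : ℂ) * Complex.I * (a : ℂ) * (((b * D : ℕ) : ℕ) : ℂ) / (d : ℂ))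
      = Complex.exp (-(2 * (Real.pi : ℂ) * Complex.I) / (K : ℂ)) ^ (a * b) := by
  have hdC : (d : ℂ) ≠ 0 := Nat.cast_ne_zero.mpr (NeZero.ne d)
  have hKC : (K : ℂ) ≠ 0 := by
    intro h
    rw [show K = 0 by exact_mod_cast h, zero_mul] at hKD
    exact NeZero.ne d hKD.symm
  have hcast : (K : ℂ) * (D : ℂ) = (d : ℂ) := by exact_mod_cast congrArg (Nat.cast : ℕ → ℂ) hKD
  rw [← Complex.exp_nat_mul]
  congr 1
  push_cast
  have hDC : (D : ℂ) ≠ 0 := by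
    intro h; rw [h, mul_zero] at hcast; exact hdC hcast.symm
  rw [← hcast]
  field_simp

lemma expToPowK (K : ℕ) (a b : ℕ) :
    Complex.exp (-2 * (Real.pi : ℂ) * Complex.I * (a : ℂ) * (b : ℂ) / (K : ℂ))
      = Complex.exp (-(2 * (Real.pi : ℂ) * Complex.I) / (K : ℂ)) ^ (a * b) := by
  rw [← Complex.exp_nat_mul]
  congr 1
  push_cast
  ring

/-- subsampled-column WDD identity, noiseless. -/
theorem wdd_subsampled_col (d K : ℕ) [NeZero d] [NeZero K]
    (hK : K ∣ d) (x m : ZMod d → ℂ) (y : ZMod d → ZMod d → ℂ)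
    (hy : ∀ ℓ k : ZMod d, y ℓ k =
      ((‖(∑ n : ZMod d, x n * m (n - ℓ) *
        Complex.exp (-2 * Real.pi * Complex.I * (n.val : ℂ) * (k.val : ℂ) / (d : ℂ)))‖) ^ 2 : ℂ)) :
    ∀ ℓ : ZMod d, ∀ ω : ZMod K,
      dftV K (fun n : ZMod K => y ℓ ((n.val * (d / K) : ℕ) : ZMod d)) ω =
        (K : ℂ) * ∑ r ∈ Finset.range (d / K),
          convV d
            (hadV x (shiftV (((ω.val : ℤ) - (r : ℤ) * (K : ℤ) : ℤ) : ZMod d) (conjV x)))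
            (hadV (revV m) (shiftV ((((r : ℤ) * (K : ℤ) - (ω.val : ℤ)) : ℤ) : ZMod d)
              (conjV (revV m)))) ℓ := by
  intro ℓ ω
  have hKD : K * (d / K) = d := Nat.mul_div_cancel' hK
  set D := d / K with hDdef
  have hDne : D ≠ 0 := by
    intro h
    rw [h, Nat.mul_zero] at hKD
    exact NeZero.ne d hKD.symm
  set ζ : ℂ := Complex.exp (-(2 * (Real.pi : ℂ) * Complex.I) / (K : ℂ)) with hζdef
  have hζne : ζ ≠ 0 := Complex.exp_ne_zero _
  have hprim : IsPrimitiveRoot ζ K := by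
    have h := Complex.isPrimitiveRoot_exp K (NeZero.ne K)
    have heq : ζ = (Complex.exp (2 * (Real.pi : ℂ) * Complex.I / (K : ℂ)))⁻¹ := by
      rw [hζdef, ← Complex.exp_neg]
      congr 1
      ring
    rw [heq]
    exact h.inv
  have hζK : ζ ^ K = 1 := hprim.pow_eq_one
  have hζone : ∀ s : ℤ, ζ ^ s = 1 ↔ (K : ℤ) ∣ s := fun s => hprim.zpow_eq_one_iff_dvd s
  have hconj : (starRingEnd ℂ) ζ = ζ⁻¹ := by
    rw [hζdef, ← Complex.exp_conj, ← Complex.exp_neg]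
    congr 1
    simp [map_div₀, Complex.conj_I, map_ofNat]
    ring
  have hconjζ : ∀ a : ℕ, (starRingEnd ℂ) (ζ ^ a) = ζ ^ (-(a : ℤ)) := by
    intro a
    rw [map_pow, hconj, inv_pow, ← zpow_natCast, ← zpow_neg]
  set C : ZMod d → ZMod d → ℂ := fun n n' =>
    x n * m (n - ℓ) * ((starRingEnd ℂ) (x n') * (starRingEnd ℂ) (m (n' - ℓ))) with hC
  have hzK : ∀ s : ℤ, (ζ ^ s) ^ K = 1 := by
    intro s
    rw [← zpow_natCast (ζ ^ s) K, ← zpow_mul, mul_comm, zpow_mul, zpow_natCast, hζK, one_zpow]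
  have habs : ∀ S : ℂ, ((‖S‖ : ℂ)) ^ 2 = S * (starRingEnd ℂ) S := by
    intro S
    rw [← Complex.ofReal_pow, Complex.sq_norm, Complex.mul_conj]
  have hval : ∀ j : ZMod K, ((j.val * D : ℕ) : ZMod d).val = j.val * D := by
    intro j
    refine ZMod.val_cast_of_lt ?_
    calc j.val * D < K * D := Nat.mul_lt_mul_of_lt_of_le (ZMod.val_lt j) le_rfl (Nat.pos_of_ne_zero hDne)
    _ = d := hKD
  have step1 : dftV K (fun n : ZMod K => y ℓ ((n.val * D : ℕ) : ZMod d)) ω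
      = ∑ j : ZMod K, ∑ n : ZMod d, ∑ n' : ZMod d,
          C n n' * (ζ ^ ((n.val : ℤ) - (n'.val : ℤ) + (ω.val : ℤ))) ^ j.val := by
    show (∑ j : ZMod K, y ℓ ((j.val * D : ℕ) : ZMod d) *
        Complex.exp (-2 * Real.pi * Complex.I * (j.val : ℂ) * (ω.val : ℂ) / (K : ℂ))) = _
    refine Finset.sum_congr rfl (fun j _ => ?_)
    rw [hy, habs, map_sum]
    simp only [map_mul, hval j]
    simp only [expToPowSub d K D hKD, ← hζdef, hconjζ]
    rw [expToPowK K j.val ω.val, ← hζdef]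
    rw [Finset.sum_mul_sum, Finset.sum_mul]
    refine Finset.sum_congr rfl (fun n _ => ?_)
    rw [Finset.sum_mul]
    refine Finset.sum_congr rfl (fun n' _ => ?_)
    have hz : ζ ^ (n.val * j.val) * ζ ^ (-((n'.val * j.val : ℕ) : ℤ)) * ζ ^ (j.val * ω.val)
        = (ζ ^ ((n.val : ℤ) - (n'.val : ℤ) + (ω.val : ℤ))) ^ j.val := by
      rw [← zpow_natCast ζ (n.val * j.val), ← zpow_natCast ζ (j.val * ω.val),
        ← zpow_natCast (ζ ^ ((n.val : ℤ) - (n'.val : ℤ) + (ω.val : ℤ))) j.val, ← zpow_mul,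
        ← zpow_add₀ hζne, ← zpow_add₀ hζne]
      congr 1
      push_cast
      ring
    calc (x n * m (n - ℓ) * ζ ^ (n.val * j.val)) *
          ((starRingEnd ℂ) (x n') * (starRingEnd ℂ) (m (n' - ℓ)) * ζ ^ (-((n'.val * j.val : ℕ) : ℤ)))
          * ζ ^ (j.val * ω.val)
        = C n n' * (ζ ^ (n.val * j.val) * ζ ^ (-((n'.val * j.val : ℕ) : ℤ)) * ζ ^ (j.val * ω.val)) := by
          rw [hC]; ring
      _ = _ := by rw [hz]
  have step2 : ∑ j : ZMod K, ∑ n : ZMod d, ∑ n' : ZMod d,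
          C n n' * (ζ ^ ((n.val : ℤ) - (n'.val : ℤ) + (ω.val : ℤ))) ^ j.val
      = (K : ℂ) * ∑ n : ZMod d, ∑ r ∈ Finset.range D,
          C n (n + ((((ω.val : ℤ) - (r : ℤ) * (K : ℤ)) : ℤ) : ZMod d)) := by
    rw [Finset.sum_comm, Finset.mul_sum]
    refine Finset.sum_congr rfl (fun n _ => ?_)
    rw [Finset.sum_comm]
    have harg : ∀ r : ℕ, ((((n.val + ω.val : ℕ) : ℤ) - (r : ℤ) * (K : ℤ) : ℤ) : ZMod d)
        = n + ((((ω.val : ℤ) - (r : ℤ) * (K : ℤ)) : ℤ) : ZMod d) := by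
      intro r
      push_cast [ZMod.natCast_val, ZMod.cast_id]
      ring
    calc ∑ n' : ZMod d, ∑ j : ZMod K,
          C n n' * (ζ ^ ((n.val : ℤ) - (n'.val : ℤ) + (ω.val : ℤ))) ^ j.val
        = ∑ n' : ZMod d, (if (K : ℤ) ∣ (((n.val + ω.val : ℕ) : ℤ) - (n'.val : ℤ))
            then C n n' else 0) * (K : ℂ) := by
          refine Finset.sum_congr rfl (fun n' _ => ?_)
          rw [← Finset.mul_sum, charSum K _ (hzK _)]
          rw [if_congr (hζone ((n.val : ℤ) - (n'.val : ℤ) + (ω.val : ℤ))) rfl rfl]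
          have hEq : ((n.val : ℤ) - (n'.val : ℤ) + (ω.val : ℤ))
              = (((n.val + ω.val : ℕ) : ℤ) - (n'.val : ℤ)) := by
            push_cast
            ring
          rw [hEq]
          split_ifs <;> ring
        _ = (∑ n' : ZMod d, if (K : ℤ) ∣ (((n.val + ω.val : ℕ) : ℤ) - (n'.val : ℤ))
            then C n n' else 0) * (K : ℂ) := by rw [Finset.sum_mul]
        _ = (∑ r ∈ Finset.range D,
            C n ((((n.val + ω.val : ℕ) : ℤ) - (r : ℤ) * (K : ℤ) : ℤ) : ZMod d)) * (K : ℂ) := by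
          rw [sum_shift d K D hKD (n.val + ω.val) (fun n' => C n n')]
        _ = (K : ℂ) * ∑ r ∈ Finset.range D,
            C n (n + ((((ω.val : ℤ) - (r : ℤ) * (K : ℤ)) : ℤ) : ZMod d)) := by
          rw [mul_comm]
          congr 1
          exact Finset.sum_congr rfl (fun r _ => by rw [harg r])
  rw [step1, step2]
  congr 1
  rw [Finset.sum_comm]
  refine Finset.sum_congr rfl (fun r _ => ?_)
  simp only [convV, hadV, shiftV, revV, conjV]
  refine Finset.sum_congr rfl (fun n _ => ?_)
  set a : ZMod d := ((((ω.val : ℤ) - (r : ℤ) * (K : ℤ)) : ℤ) : ZMod d) with ha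
  have hba : ((((r : ℤ) * (K : ℤ) - (ω.val : ℤ)) : ℤ) : ZMod d) = -a := by
    rw [ha]
    push_cast
    ring
  rw [hba]
  have h1 : -(ℓ - n) = n - ℓ := by ring
  have h2 : -(ℓ - n + -a) = n + a - ℓ := by ring
  rw [h1, h2, hC]
  ring
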